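/- Let T > 0, m, p ∈ ℕ, and let x_1,…,x_Ñ be distinct points in [0,T)^m. Then for every choice of prescribed Hermite–Birkhoff data f_{k,α} ∈ ℂ (k ∈ {1,…,Ñ}, α a multi-index in ℕ^m with |α| ≤ p) there exist a finite set of frequencies Λ ⊆ (2π/T)ℤ^m with cardinality |Λ| ≤ ((p+1)Ñ + 1)^m and coefficients a_ω ∈ ℂ (ω ∈ Λ) such that the trigonometric polynomial u(x) = ∑_{ω∈Λ} a_ω e^{iω·x} satisfies ∂^α u(x_k) = f_{k,α} for every k ∈ {1,…,Ñ} and every multi-index α with |α| ≤ p. -/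

import Mathlib

open scoped BigOperators

/-- The partial derivative `∂ᵢ` of a function on `ℝ^m`, as an operator on functions. -/
noncomputable def partialDerivOp {m : ℕ} (i : Fin m) :
    (EuclideanSpace ℝ (Fin m) → ℂ) → (EuclideanSpace ℝ (Fin m) → ℂ) :=
  fun u x => fderiv ℝ u x (EuclideanSpace.single i 1)

/-- The mixed partial derivative `∂^α` associated with a multi-index `α : Fin m → ℕ`. -/
noncomputable def multiDeriv {m : ℕ} (α : Fin m → ℕ) :
    (EuclideanSpace ℝ (Fin m) → ℂ) → (EuclideanSpace ℝ (Fin m) → ℂ) :=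
  fun u => (List.finRange m).foldr (fun i v => (partialDerivOp i)^[α i] v) u

open MvPolynomial

variable {m : ℕ}

noncomputable def Dsingle (κ : ℂ) (l : Fin m) (P : MvPolynomial (Fin m) ℂ) :
    MvPolynomial (Fin m) ℂ :=
  κ • (MvPolynomial.pderiv l P * MvPolynomial.X l)

noncomputable def Dmulti (κ : ℂ) (α : Fin m → ℕ) (P : MvPolynomial (Fin m) ℂ) :
    MvPolynomial (Fin m) ℂ :=
  (List.finRange m).foldr (fun i Q => (Dsingle κ i)^[α i] Q) P

noncomputable def symc (κ : ℂ) (d : Fin m →₀ ℕ) (α : Fin m → ℕ) : ℂ :=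
  ∏ j, (κ * d j) ^ (α j)

lemma Dsingle_monomial (κ : ℂ) (l : Fin m) (d : Fin m →₀ ℕ) (a : ℂ) :
    Dsingle κ l (monomial d a) = monomial d ((κ * d l) * a) := by
  unfold Dsingle
  rw [pderiv_monomial]
  rcases Nat.eq_zero_or_pos (d l) with h | h
  · simp [h]
  · have hX : (X l : MvPolynomial (Fin m) ℂ) = monomial (Finsupp.single l 1) 1 := rfl
    rw [hX, monomial_mul]
    have : d - Finsupp.single l 1 + Finsupp.single l 1 = d := by
      ext j
      rcases eq_or_ne j l with rfl | hj
      · simp [Finsupp.single_apply]; omega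
      · simp [Finsupp.single_apply, hj.symm, Finsupp.sub_apply]
    rw [this, smul_monomial, smul_eq_mul]
    ring_nf

lemma Dsingle_add (κ : ℂ) (l : Fin m) (P Q : MvPolynomial (Fin m) ℂ) :
    Dsingle κ l (P + Q) = Dsingle κ l P + Dsingle κ l Q := by
  unfold Dsingle
  rw [map_add, add_mul, smul_add]

lemma coeff_Dsingle (κ : ℂ) (l : Fin m) (d : Fin m →₀ ℕ) (P : MvPolynomial (Fin m) ℂ) :
    coeff d (Dsingle κ l P) = (κ * d l) * coeff d P := by
  induction P using MvPolynomial.induction_on' with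
  | monomial u a =>
    rw [Dsingle_monomial, coeff_monomial, coeff_monomial]
    split
    · next h => subst h; ring
    · ring
  | add p q hp hq =>
    rw [Dsingle_add, coeff_add, coeff_add, hp, hq]; ring

lemma coeff_Dsingle_iter (κ : ℂ) (l : Fin m) (n : ℕ) (d : Fin m →₀ ℕ)
    (P : MvPolynomial (Fin m) ℂ) :
    coeff d ((Dsingle κ l)^[n] P) = (κ * d l) ^ n * coeff d P := by
  induction n with
  | zero => simp
  | succ n ih =>
    rw [Function.iterate_succ_apply', coeff_Dsingle, ih]; ring

lemma coeff_Dmulti (κ : ℂ) (α : Fin m → ℕ) (d : Fin m →₀ ℕ) (P : MvPolynomial (Fin m) ℂ) :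
    coeff d (Dmulti κ α P) = symc κ d α * coeff d P := by
  have H : ∀ L : List (Fin m), coeff d (L.foldr (fun i Q => (Dsingle κ i)^[α i] Q) P) =
      (L.map fun i => (κ * d i) ^ (α i)).prod * coeff d P := by
    intro L
    induction L with
    | nil => simp
    | cons a L ih =>
      rw [List.foldr_cons, coeff_Dsingle_iter, ih, List.map_cons, List.prod_cons]; ring
  rw [Dmulti, H, symc, Fin.prod_univ_def]

lemma Dmulti_ext_lemma {P Q : MvPolynomial (Fin m) ℂ}
    (h : ∀ d, coeff d P = coeff d Q) : P = Q := MvPolynomial.ext _ _ h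

lemma Dmulti_add (κ : ℂ) (α : Fin m → ℕ) (P Q : MvPolynomial (Fin m) ℂ) :
    Dmulti κ α (P + Q) = Dmulti κ α P + Dmulti κ α Q := by
  apply Dmulti_ext_lemma; intro d
  rw [coeff_add, coeff_Dmulti, coeff_Dmulti, coeff_Dmulti, coeff_add]; ring

lemma Dmulti_smul (κ a : ℂ) (α : Fin m → ℕ) (P : MvPolynomial (Fin m) ℂ) :
    Dmulti κ α (a • P) = a • Dmulti κ α P := by
  apply Dmulti_ext_lemma; intro d
  rw [coeff_smul, coeff_Dmulti, coeff_Dmulti, coeff_smul, smul_eq_mul, smul_eq_mul]; ring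

lemma Dmulti_zero (κ : ℂ) (α : Fin m → ℕ) : Dmulti κ α (0 : MvPolynomial (Fin m) ℂ) = 0 := by
  apply Dmulti_ext_lemma; intro d
  rw [coeff_Dmulti]; simp

lemma Dmulti_sum (κ : ℂ) (α : Fin m → ℕ) {ι : Type*} [DecidableEq ι] (s : Finset ι)
    (F : ι → MvPolynomial (Fin m) ℂ) :
    Dmulti κ α (∑ i ∈ s, F i) = ∑ i ∈ s, Dmulti κ α (F i) := by
  induction s using Finset.induction with
  | empty => simp [Dmulti_zero]
  | insert _ _ h ih => rw [Finset.sum_insert h, Finset.sum_insert h, Dmulti_add, ih]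

lemma Dmulti_zeroExp (κ : ℂ) (P : MvPolynomial (Fin m) ℂ) :
    Dmulti κ (0 : Fin m → ℕ) P = P := by
  apply Dmulti_ext_lemma; intro d
  rw [coeff_Dmulti, symc]; simp

lemma Dmulti_monomial (κ : ℂ) (α : Fin m → ℕ) (d : Fin m →₀ ℕ) (a : ℂ) :
    Dmulti κ α (monomial d a) = monomial d (symc κ d α * a) := by
  apply Dmulti_ext_lemma; intro e
  rw [coeff_Dmulti, coeff_monomial, coeff_monomial]
  split
  · next h => subst h; ring
  · ring

lemma symc_add (κ : ℂ) (d : Fin m →₀ ℕ) (α β : Fin m → ℕ) :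
    symc κ d (α + β) = symc κ d α * symc κ d β := by
  rw [symc, symc, symc, ← Finset.prod_mul_distrib]
  exact Finset.prod_congr rfl fun j _ => by rw [Pi.add_apply, pow_add]

lemma symc_single (κ : ℂ) (d : Fin m →₀ ℕ) (l : Fin m) :
    symc κ d (Pi.single l 1) = κ * d l := by
  rw [symc]
  rw [Finset.prod_eq_single l (fun j _ hj => by simp [Pi.single_eq_of_ne hj]) (by simp)]
  simp

lemma Dmulti_peel (κ : ℂ) (α : Fin m → ℕ) (l : Fin m) (P : MvPolynomial (Fin m) ℂ) :
    Dmulti κ (α + Pi.single l 1) P = Dmulti κ α (Dsingle κ l P) := by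
  apply Dmulti_ext_lemma; intro d
  rw [coeff_Dmulti, coeff_Dmulti, coeff_Dsingle, symc_add, symc_single]; ring

lemma Dmulti_peel' (κ : ℂ) (α : Fin m → ℕ) (l : Fin m) (P : MvPolynomial (Fin m) ℂ) :
    Dmulti κ (α + Pi.single l 1) P = Dsingle κ l (Dmulti κ α P) := by
  apply Dmulti_ext_lemma; intro d
  rw [coeff_Dmulti, coeff_Dsingle, coeff_Dmulti, symc_add, symc_single]; ring

lemma Dmulti_eq_sum_support (κ : ℂ) (α : Fin m → ℕ) (P : MvPolynomial (Fin m) ℂ) :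
    Dmulti κ α P = ∑ d ∈ P.support, monomial d (symc κ d α * coeff d P) := by
  conv_lhs => rw [← support_sum_monomial_coeff P]
  rw [Dmulti_sum]
  exact Finset.sum_congr rfl fun d _ => Dmulti_monomial κ α d (coeff d P)

lemma eval_Dmulti (κ : ℂ) (α : Fin m → ℕ) (t : Fin m → ℂ) (P : MvPolynomial (Fin m) ℂ) :
    eval t (Dmulti κ α P) =
      ∑ d ∈ P.support, symc κ d α * coeff d P * ∏ j, t j ^ d j := by
  rw [Dmulti_eq_sum_support, map_sum]
  refine Finset.sum_congr rfl fun d _ => ?_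
  rw [eval_monomial, Finsupp.prod_fintype]
  intro i; exact pow_zero _

-- divisibility lemmas
lemma dvd_Dsingle_ne (κ : ℂ) {i l : Fin m} (hli : l ≠ i) (a : ℂ) (n : ℕ)
    {P : MvPolynomial (Fin m) ℂ} (h : (X i - C a) ^ n ∣ P) :
    (X i - C a) ^ n ∣ Dsingle κ l P := by
  obtain ⟨R, rfl⟩ := h
  unfold Dsingle
  rw [pderiv_mul]
  have hz : pderiv l ((X i - C a) ^ n : MvPolynomial (Fin m) ℂ) = 0 := by
    rw [pderiv_pow]
    have : pderiv l (X i - C a : MvPolynomial (Fin m) ℂ) = 0 := by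
      rw [map_sub, pderiv_X_of_ne (Ne.symm hli), pderiv_C, sub_zero]
    rw [this, mul_zero]
  rw [hz, zero_mul, zero_add, smul_eq_C_mul]
  have h1 : (X i - C a) ^ n ∣ ((X i - C a) ^ n * pderiv l R * X l : MvPolynomial (Fin m) ℂ) :=
    ((dvd_refl _).mul_right _).mul_right _
  exact h1.mul_left _

lemma dvd_Dsingle (κ : ℂ) (i l : Fin m) (a : ℂ) (n : ℕ)
    {P : MvPolynomial (Fin m) ℂ} (h : (X i - C a) ^ n ∣ P) :
    (X i - C a) ^ (n - 1) ∣ Dsingle κ l P := by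
  rcases Nat.eq_zero_or_pos n with rfl | hn
  · simp
  obtain ⟨R, rfl⟩ := h
  unfold Dsingle
  rw [pderiv_mul, pderiv_pow, smul_eq_C_mul]
  have h1 : (X i - C a) ^ (n - 1) ∣
      ((n : MvPolynomial (Fin m) ℂ) * (X i - C a) ^ (n - 1) * pderiv l (X i - C a) * R * X l) := by
    exact Dvd.dvd.mul_right (Dvd.dvd.mul_right (Dvd.dvd.mul_right
      (Dvd.dvd.mul_left (dvd_refl _) _) _) _) _
  have h2 : (X i - C a) ^ (n - 1) ∣
      ((X i - C a) ^ n * pderiv l R * X l : MvPolynomial (Fin m) ℂ) := by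
    exact Dvd.dvd.mul_right (Dvd.dvd.mul_right
      (pow_dvd_pow _ (Nat.sub_le n 1)) _) _
  have h3 := dvd_add h1 h2
  rw [← add_mul] at h3
  exact h3.mul_left _

lemma sum_pos_exists {α : Fin m → ℕ} (h : 0 < ∑ j, α j) : ∃ l, α l ≠ 0 := by
  by_contra hc
  push_neg at hc
  simp [hc] at h

lemma exp_decomp {α : Fin m → ℕ} {l : Fin m} (hl : α l ≠ 0) :
    α = (α - Pi.single l 1) + Pi.single l 1 := by
  funext j
  rcases eq_or_ne j l with rfl | hj
  · simp only [Pi.add_apply, Pi.sub_apply, Pi.single_eq_same]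
    omega
  · simp only [Pi.add_apply, Pi.sub_apply, Pi.single_eq_of_ne hj]
    omega

lemma sum_exp_decomp {α : Fin m → ℕ} {l : Fin m} (hl : α l ≠ 0) :
    ∑ j, (α - Pi.single l 1 : Fin m → ℕ) j = (∑ j, α j) - 1 := by
  have h1 : ∑ j, α j = (∑ j, (α - Pi.single l 1 : Fin m → ℕ) j) + ∑ j, (Pi.single l 1 : Fin m → ℕ) j := by
    rw [← Finset.sum_add_distrib]
    refine Finset.sum_congr rfl fun j _ => ?_
    show α j = (α - Pi.single l 1 : Fin m → ℕ) j + (Pi.single l 1 : Fin m → ℕ) j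
    rcases eq_or_ne j l with rfl | hj
    · simp only [Pi.sub_apply, Pi.single_eq_same]; omega
    · simp only [Pi.sub_apply, Pi.single_eq_of_ne hj]; omega
  have h2 : ∑ j, (Pi.single l 1 : Fin m → ℕ) j = (1 : ℕ) := by
    rw [Finset.sum_pi_single']
    simp
  omega

lemma dvd_Dmulti (κ : ℂ) (i : Fin m) (a : ℂ) (n : ℕ) (α : Fin m → ℕ)
    {P : MvPolynomial (Fin m) ℂ} (h : (X i - C a) ^ n ∣ P) :
    (X i - C a) ^ (n - α i) ∣ Dmulti κ α P := by
  suffices H : ∀ (s : ℕ) (α : Fin m → ℕ) (P : MvPolynomial (Fin m) ℂ),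
      (X i - C a) ^ n ∣ P → ∑ j, α j = s → (X i - C a) ^ (n - α i) ∣ Dmulti κ α P by
    exact H _ α P h rfl
  intro s
  induction s with
  | zero =>
    intro α P h hs
    have : α = 0 := by funext j; exact (Finset.sum_eq_zero_iff.mp hs) j (Finset.mem_univ j)
    subst this
    rw [Dmulti_zeroExp]
    simpa using h
  | succ s ih =>
    intro α P h hs
    obtain ⟨l, hl⟩ := sum_pos_exists (α := α) (by rw [hs]; omega)
    have hd := exp_decomp hl
    rw [hd, Dmulti_peel']
    have hsum : ∑ j, (α - Pi.single l 1 : Fin m → ℕ) j = s := by rw [sum_exp_decomp hl]; omega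
    have IH := ih (α - Pi.single l 1) P h hsum
    rcases eq_or_ne l i with rfl | hli
    · have h2 := dvd_Dsingle κ l l a _ IH
      have harith : n - (α - Pi.single l 1 : Fin m → ℕ) l - 1 = n - α l := by
        simp only [Pi.sub_apply, Pi.single_eq_same]
        omega
      rw [harith] at h2
      rw [← hd]
      exact h2
    · have h2 := dvd_Dsingle_ne κ hli a _ IH
      have harith : n - (α - Pi.single l 1 : Fin m → ℕ) i = n - α i := by
        simp only [Pi.sub_apply, Pi.single_eq_of_ne (Ne.symm hli)]
        omega
      rw [harith] at h2
      rw [← hd]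
      exact h2

noncomputable def below (α : Fin m → ℕ) : Finset (Fin m → ℕ) :=
  Fintype.piFinset fun j => Finset.range (α j + 1)

lemma mem_below {α β : Fin m → ℕ} : β ∈ below α ↔ ∀ j, β j ≤ α j := by
  rw [below, Fintype.mem_piFinset]
  exact forall_congr' fun j => by rw [Finset.mem_range, Nat.lt_succ_iff]

lemma below_zero : below (0 : Fin m → ℕ) = {(0 : Fin m → ℕ)} := by
  ext β
  rw [mem_below, Finset.mem_singleton]
  constructor
  · intro h; funext j; exact Nat.le_zero.mp (h j)
  · intro h; subst h; intro j; exact le_refl _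

lemma Dsingle_leibniz (κ : ℂ) (l : Fin m) (V w : MvPolynomial (Fin m) ℂ) :
    Dsingle κ l (V * w) = V * Dsingle κ l w + Dsingle κ l V * w := by
  unfold Dsingle
  rw [pderiv_mul, smul_eq_C_mul, smul_eq_C_mul, smul_eq_C_mul]
  ring

lemma leibniz_lite (κ : ℂ) (t : Fin m → ℂ) (α : Fin m → ℕ) (V : MvPolynomial (Fin m) ℂ) :
    ∃ cc : (Fin m → ℕ) → ℂ, cc α = eval t V ∧
      ∀ w, eval t (Dmulti κ α (V * w)) = ∑ β ∈ below α, cc β * eval t (Dmulti κ β w) := by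
  suffices H : ∀ (s : ℕ) (α : Fin m → ℕ), ∑ j, α j = s →
      ∀ V : MvPolynomial (Fin m) ℂ, ∃ cc : (Fin m → ℕ) → ℂ, cc α = eval t V ∧
      ∀ w, eval t (Dmulti κ α (V * w)) = ∑ β ∈ below α, cc β * eval t (Dmulti κ β w) by
    exact H _ α rfl V
  intro s
  induction s with
  | zero =>
    intro α hs V
    have hα : α = 0 := by
      funext j; exact (Finset.sum_eq_zero_iff.mp hs) j (Finset.mem_univ j)
    subst hα
    refine ⟨fun β => eval t V, rfl, fun w => ?_⟩
    rw [below_zero, Finset.sum_singleton, Dmulti_zeroExp, Dmulti_zeroExp, map_mul]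
  | succ s ih =>
    intro α hs V
    obtain ⟨l, hl⟩ := sum_pos_exists (α := α) (by rw [hs]; omega)
    set α' : Fin m → ℕ := α - Pi.single l 1 with hα'
    have hd : α = α' + Pi.single l 1 := exp_decomp hl
    have hsum : ∑ j, α' j = s := by rw [hα', sum_exp_decomp hl]; omega
    obtain ⟨c1, hc1, H1⟩ := ih α' hsum V
    obtain ⟨c2, _, H2⟩ := ih α' hsum (Dsingle κ l V)
    classical
    refine ⟨fun γ => (if γ l ≠ 0 then c1 (γ - Pi.single l 1) else 0) +
      (if γ ∈ below α' then c2 γ else 0), ?_, ?_⟩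
    · have h2 : α ∉ below α' := by
        rw [mem_below]
        push_neg
        refine ⟨l, ?_⟩
        rw [hα']
        simp only [Pi.sub_apply, Pi.single_eq_same]
        omega
      show (if α l ≠ 0 then c1 (α - Pi.single l 1) else 0) +
        (if α ∈ below α' then c2 α else 0) = eval t V
      rw [if_pos hl, if_neg h2, add_zero, ← hα', hc1]
    · intro w
      have step1 : Dmulti κ α (V * w) =
          Dmulti κ α' (V * Dsingle κ l w) + Dmulti κ α' (Dsingle κ l V * w) := by
        rw [hd, Dmulti_peel, Dsingle_leibniz, Dmulti_add]
      rw [step1, map_add, H1 (Dsingle κ l w), H2 w]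
      have key1 : ∀ β, Dmulti κ β (Dsingle κ l w) = Dmulti κ (β + Pi.single l 1) w := by
        intro β; rw [Dmulti_peel]
      -- rewrite first sum
      have e1 : ∑ β ∈ below α', c1 β * eval t (Dmulti κ β (Dsingle κ l w)) =
          ∑ γ ∈ (below α).filter (fun γ => γ l ≠ 0),
            c1 (γ - Pi.single l 1) * eval t (Dmulti κ γ w) := by
        rw [Finset.sum_congr rfl (fun β _ => by rw [key1 β])]
        refine Finset.sum_nbij' (fun β => β + Pi.single l 1) (fun γ => γ - Pi.single l 1)
          ?_ ?_ ?_ ?_ ?_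
        · intro β hβ
          rw [Finset.mem_filter, mem_below]
          rw [mem_below] at hβ
          constructor
          · intro j
            rcases eq_or_ne j l with rfl | hj
            · simp only [Pi.add_apply, Pi.single_eq_same]
              have := hβ j
              rw [hα'] at this
              simp only [Pi.sub_apply, Pi.single_eq_same] at this
              omega
            · simp only [Pi.add_apply, Pi.single_eq_of_ne hj, add_zero]
              have := hβ j
              rw [hα'] at this
              simp only [Pi.sub_apply, Pi.single_eq_of_ne hj] at this
              omega
          · simp only [Pi.add_apply, Pi.single_eq_same]
            omega
        · intro γ hγ
          rw [Finset.mem_filter, mem_below] at hγ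
          rw [mem_below]
          intro j
          rcases eq_or_ne j l with rfl | hj
          · rw [hα']
            simp only [Pi.sub_apply, Pi.single_eq_same]
            have := hγ.1 j
            omega
          · rw [hα']
            simp only [Pi.sub_apply, Pi.single_eq_of_ne hj]
            have := hγ.1 j
            omega
        · intro β hβ
          funext j
          rcases eq_or_ne j l with rfl | hj
          · simp only [Pi.sub_apply, Pi.add_apply, Pi.single_eq_same]
            omega
          · simp only [Pi.sub_apply, Pi.add_apply, Pi.single_eq_of_ne hj]
            omega
        · intro γ hγ
          rw [Finset.mem_filter] at hγ
          funext j
          rcases eq_or_ne j l with rfl | hj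
          · simp only [Pi.sub_apply, Pi.add_apply, Pi.single_eq_same]
            have := hγ.2
            omega
          · simp only [Pi.sub_apply, Pi.add_apply, Pi.single_eq_of_ne hj]
            omega
        · intro β hβ
          have : (β + Pi.single l 1 : Fin m → ℕ) - Pi.single l 1 = β := by
            funext j
            rcases eq_or_ne j l with rfl | hj
            · simp only [Pi.sub_apply, Pi.add_apply, Pi.single_eq_same]; omega
            · simp only [Pi.sub_apply, Pi.add_apply, Pi.single_eq_of_ne hj]; omega
          rw [this]
      have hsubset : below α' ⊆ below α := by
        intro γ hγ
        rw [mem_below] at hγ ⊢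
        intro j
        have := hγ j
        rw [hα'] at this
        rcases eq_or_ne j l with rfl | hj
        · simp only [Pi.sub_apply, Pi.single_eq_same] at this
          omega
        · simp only [Pi.sub_apply, Pi.single_eq_of_ne hj] at this
          omega
      have hf : (below α).filter (fun γ => γ ∈ below α') = below α' := by
        ext γ
        rw [Finset.mem_filter]
        exact ⟨fun h => h.2, fun h => ⟨hsubset h, h⟩⟩
      have e2 : ∑ γ ∈ below α, (if γ ∈ below α' then c2 γ else 0) * eval t (Dmulti κ γ w) =
          ∑ β ∈ below α', c2 β * eval t (Dmulti κ β w) := by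
        have hcong : ∀ γ ∈ below α,
            (if γ ∈ below α' then c2 γ else 0) * eval t (Dmulti κ γ w) =
            (if γ ∈ below α' then c2 γ * eval t (Dmulti κ γ w) else 0) :=
          fun γ _ => by rw [ite_mul, zero_mul]
        rw [Finset.sum_congr rfl hcong, ← Finset.sum_filter, hf]
      have e1' : ∑ γ ∈ (below α).filter (fun γ => γ l ≠ 0),
            c1 (γ - Pi.single l 1) * eval t (Dmulti κ γ w) =
          ∑ γ ∈ below α, (if γ l ≠ 0 then c1 (γ - Pi.single l 1) else 0) *
            eval t (Dmulti κ γ w) := by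
        rw [Finset.sum_filter]
        refine Finset.sum_congr rfl fun γ _ => ?_
        rw [ite_mul, zero_mul]
      rw [e1, e1', ← e2, ← Finset.sum_add_distrib]
      refine Finset.sum_congr rfl fun γ _ => ?_
      ring

-- Analysis section
noncomputable def upoly (c : ℝ) (P : MvPolynomial (Fin m) ℂ) :
    EuclideanSpace ℝ (Fin m) → ℂ :=
  fun y => MvPolynomial.eval (fun j => Complex.exp (Complex.I * (c * y j))) P

noncomputable def lform (c : ℝ) (d : Fin m →₀ ℕ) :
    EuclideanSpace ℝ (Fin m) →L[ℝ] ℂ :=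
  ∑ j, ((Complex.I * c * d j) : ℂ) •
    (Complex.ofRealCLM.comp (EuclideanSpace.proj j))

lemma lform_apply (c : ℝ) (d : Fin m →₀ ℕ) (y : EuclideanSpace ℝ (Fin m)) :
    lform c d y = ∑ j, (Complex.I * c * d j) * (y j : ℂ) := by
  rw [lform, ContinuousLinearMap.sum_apply]
  refine Finset.sum_congr rfl fun j _ => ?_
  simp

lemma lform_single (c : ℝ) (d : Fin m →₀ ℕ) (i : Fin m) :
    lform c d (EuclideanSpace.single i 1) = Complex.I * c * d i := by
  rw [lform_apply]
  rw [Finset.sum_eq_single i]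
  · simp
  · intro j _ hj
    rw [EuclideanSpace.single_apply, if_neg hj]
    simp
  · intro h
    exact absurd (Finset.mem_univ i) h

lemma upoly_eq_sum (c : ℝ) (P : MvPolynomial (Fin m) ℂ) {s : Finset (Fin m →₀ ℕ)}
    (hs : P.support ⊆ s) (y : EuclideanSpace ℝ (Fin m)) :
    upoly c P y = ∑ d ∈ s, coeff d P * Complex.exp (lform c d y) := by
  rw [upoly, eval_eq']
  rw [Finset.sum_subset hs (fun d _ hd => by
    rw [MvPolynomial.notMem_support_iff.mp hd, zero_mul])]
  refine Finset.sum_congr rfl fun d _ => ?_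
  congr 1
  have : ∀ j : Fin m, Complex.exp (Complex.I * (c * y j)) ^ d j
      = Complex.exp ((d j : ℂ) * (Complex.I * (c * y j))) := by
    intro j
    rw [Complex.exp_nat_mul]
  rw [Finset.prod_congr rfl fun j _ => this j, ← Complex.exp_sum, lform_apply]
  congr 1
  refine Finset.sum_congr rfl fun j _ => ?_
  push_cast
  ring

lemma support_Dsingle_subset (κ : ℂ) (l : Fin m) (P : MvPolynomial (Fin m) ℂ) :
    (Dsingle κ l P).support ⊆ P.support := by
  intro d hd
  rw [MvPolynomial.mem_support_iff] at hd ⊢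
  intro h
  rw [coeff_Dsingle, h, mul_zero] at hd
  exact hd rfl

lemma hasFDerivAt_upoly (c : ℝ) (P : MvPolynomial (Fin m) ℂ) (y : EuclideanSpace ℝ (Fin m)) :
    HasFDerivAt (upoly c P)
      (∑ d ∈ P.support, coeff d P • (Complex.exp (lform c d y) • lform c d)) y := by
  have h : ∀ d ∈ P.support, HasFDerivAt (fun z => coeff d P * Complex.exp (lform c d z))
      (coeff d P • (Complex.exp (lform c d y) • lform c d)) y := by
    intro d _
    exact ((Complex.hasDerivAt_exp (lform c d y)).comp_hasFDerivAt y
      (lform c d).hasFDerivAt).const_mul (coeff d P)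
  have hsum := HasFDerivAt.fun_sum h
  have : upoly c P = fun z => ∑ d ∈ P.support, coeff d P * Complex.exp (lform c d z) := by
    funext z
    exact upoly_eq_sum c P (subset_refl _) z
  rw [this]
  exact hsum

lemma partialDerivOp_upoly (c : ℝ) (i : Fin m) (P : MvPolynomial (Fin m) ℂ) :
    partialDerivOp i (upoly c P) = upoly c (Dsingle (Complex.I * c) i P) := by
  funext y
  rw [partialDerivOp, (hasFDerivAt_upoly c P y).fderiv]
  rw [ContinuousLinearMap.sum_apply]
  rw [upoly_eq_sum c (Dsingle (Complex.I * c) i P) (support_Dsingle_subset _ _ _) y]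
  refine Finset.sum_congr rfl fun d _ => ?_
  rw [ContinuousLinearMap.smul_apply, ContinuousLinearMap.smul_apply, lform_single,
    coeff_Dsingle]
  simp only [smul_eq_mul]
  ring

lemma partialDerivOp_iter_upoly (c : ℝ) (i : Fin m) (n : ℕ) (P : MvPolynomial (Fin m) ℂ) :
    (partialDerivOp i)^[n] (upoly c P) = upoly c ((Dsingle (Complex.I * c) i)^[n] P) := by
  induction n generalizing P with
  | zero => rfl
  | succ n ih =>
    rw [Function.iterate_succ_apply', Function.iterate_succ_apply', ih,
      partialDerivOp_upoly]

lemma multiDeriv_foldr_upoly (c : ℝ) (α : Fin m → ℕ) (P : MvPolynomial (Fin m) ℂ) :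
    (List.finRange m).foldr (fun i v => (partialDerivOp i)^[α i] v) (upoly c P)
      = upoly c (Dmulti (Complex.I * c) α P) := by
  rw [Dmulti]
  have : ∀ L : List (Fin m),
      L.foldr (fun i v => (partialDerivOp i)^[α i] v) (upoly c P)
        = upoly c (L.foldr (fun i Q => (Dsingle (Complex.I * c) i)^[α i] Q) P) := by
    intro L
    induction L with
    | nil => rfl
    | cons a L ih =>
      rw [List.foldr_cons, List.foldr_cons, ih, partialDerivOp_iter_upoly]
  exact this _

-- single point jet surjectivity
section Jet

variable (κ : ℂ) (p : ℕ) (t : Fin m → ℂ)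

noncomputable def Bmat (j : Fin m) : Matrix (Fin (p + 1)) (Fin (p + 1)) ℂ :=
  fun a z => (κ * z) ^ (a : ℕ) * (t j) ^ (z : ℕ)

lemma Bmat_det_ne_zero (hκ : κ ≠ 0) (j : Fin m) (htj : t j ≠ 0) :
    (Bmat κ p t j).det ≠ 0 := by
  have htrans : Matrix.transpose (Bmat κ p t j) =
      Matrix.diagonal (fun z : Fin (p + 1) => (t j) ^ (z : ℕ)) *
        Matrix.vandermonde (fun z : Fin (p + 1) => κ * z) := by
    ext z a
    rw [Matrix.transpose_apply, Matrix.mul_apply]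
    rw [Finset.sum_eq_single z]
    · rw [Matrix.diagonal_apply_eq]
      simp only [Matrix.vandermonde, Bmat, Matrix.of_apply]
      ring
    · intro b _ hb
      rw [Matrix.diagonal_apply_ne' _ hb, zero_mul]
    · intro h; exact absurd (Finset.mem_univ z) h
  have hd : (Bmat κ p t j).det = (∏ z : Fin (p + 1), (t j) ^ (z : ℕ)) *
      ∏ i : Fin (p + 1), ∏ k ∈ Finset.Ioi i, ((κ * k) - (κ * i)) := by
    rw [← Matrix.det_transpose, htrans, Matrix.det_mul, Matrix.det_diagonal,
      Matrix.det_vandermonde]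
  rw [hd]
  apply mul_ne_zero
  · exact Finset.prod_ne_zero_iff.mpr fun z _ => pow_ne_zero _ htj
  · refine Finset.prod_ne_zero_iff.mpr fun i _ => Finset.prod_ne_zero_iff.mpr fun k hk => ?_
    rw [Finset.mem_Ioi] at hk
    rw [sub_ne_zero]
    intro hEq
    have h2 : (((k : ℕ) : ℂ)) = ((i : ℕ) : ℂ) := mul_left_cancel₀ hκ hEq
    have h3 : (k : ℕ) = (i : ℕ) := by exact_mod_cast h2
    omega

noncomputable def Binv (j : Fin m) : Matrix (Fin (p + 1)) (Fin (p + 1)) ℂ := (Bmat κ p t j)⁻¹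

lemma BB_inv (hκ : κ ≠ 0) (j : Fin m) (htj : t j ≠ 0) :
    Bmat κ p t j * Binv κ p t j = 1 :=
  Matrix.mul_nonsing_inv _ (isUnit_iff_ne_zero.mpr (Bmat_det_ne_zero κ p t hκ j htj))

noncomputable def toF (z : Fin m → Fin (p + 1)) : Fin m →₀ ℕ :=
  Finsupp.equivFunOnFinite.symm fun j => (z j : ℕ)

lemma toF_apply (z : Fin m → Fin (p + 1)) (j : Fin m) : toF p z j = (z j : ℕ) := rfl

noncomputable def Qb (β : Fin m → Fin (p + 1)) : MvPolynomial (Fin m) ℂ :=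
  ∑ z : Fin m → Fin (p + 1), monomial (toF p z) (∏ j, Binv κ p t j (z j) (β j))

lemma eval_Dmulti_Qb (hκ : κ ≠ 0) (ht : ∀ j, t j ≠ 0) (β : Fin m → Fin (p + 1))
    (α : Fin m → ℕ) (hα : ∀ j, α j ≤ p) :
    eval t (Dmulti κ α (Qb κ p t β)) =
      if (fun j => (⟨α j, Nat.lt_succ_of_le (hα j)⟩ : Fin (p + 1))) = β then 1 else 0 := by
  set αf : Fin m → Fin (p + 1) := fun j => ⟨α j, Nat.lt_succ_of_le (hα j)⟩ with hαf
  rw [Qb, Dmulti_sum, map_sum]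
  have hterm : ∀ z : Fin m → Fin (p + 1),
      eval t (Dmulti κ α (monomial (toF p z) (∏ j, Binv κ p t j (z j) (β j)))) =
        ∏ j, (Binv κ p t j (z j) (β j) * ((κ * (z j : ℕ)) ^ (α j) * (t j) ^ ((z j : ℕ)))) := by
    intro z
    rw [Dmulti_monomial, eval_monomial, Finsupp.prod_fintype _ _ (fun i => pow_zero _)]
    rw [symc]
    rw [← Finset.prod_mul_distrib, ← Finset.prod_mul_distrib]
    refine Finset.prod_congr rfl fun j _ => ?_
    rw [toF_apply]
    ring
  rw [Finset.sum_congr rfl fun z _ => hterm z]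
  rw [← Fintype.prod_sum (fun (j : Fin m) (w : Fin (p+1)) => Binv κ p t j w (β j) * ((κ * (w : ℕ)) ^ (α j) * (t j) ^ ((w : ℕ))))]
  have hfac : ∀ j : Fin m, (∑ w : Fin (p + 1),
      Binv κ p t j w (β j) * ((κ * (w : ℕ)) ^ (α j) * (t j) ^ ((w : ℕ)))) =
        (1 : Matrix (Fin (p+1)) (Fin (p+1)) ℂ) (αf j) (β j) := by
    intro j
    rw [← BB_inv κ p t hκ j (ht j), Matrix.mul_apply]
    refine Finset.sum_congr rfl fun w _ => ?_
    rw [Bmat]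
    have : ((αf j : ℕ)) = α j := rfl
    rw [this]
    ring
  rw [Finset.prod_congr rfl fun j _ => hfac j]
  rcases eq_or_ne αf β with h | h
  · rw [if_pos h]
    refine Finset.prod_eq_one fun j _ => ?_
    rw [congrFun h j, Matrix.one_apply_eq]
  · rw [if_neg h]
    have : ∃ j, αf j ≠ β j := by
      by_contra hc
      push_neg at hc
      exact h (funext hc)
    obtain ⟨j, hj⟩ := this
    exact Finset.prod_eq_zero (Finset.mem_univ j) (Matrix.one_apply_ne hj)

end Jet

-- degree bookkeeping
def DegLe (P : MvPolynomial (Fin m) ℂ) (D : ℕ) : Prop :=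
  ∀ d ∈ P.support, ∀ i, d i ≤ D

lemma DegLe.mono {P : MvPolynomial (Fin m) ℂ} {a b : ℕ} (h : DegLe P a) (hab : a ≤ b) :
    DegLe P b := fun d hd i => le_trans (h d hd i) hab

lemma DegLe.mul {P Q : MvPolynomial (Fin m) ℂ} {a b : ℕ} (hP : DegLe P a) (hQ : DegLe Q b) :
    DegLe (P * Q) (a + b) := by
  classical
  intro d hd i
  have := MvPolynomial.support_mul P Q hd
  rw [Finset.mem_add] at this
  obtain ⟨d1, hd1, d2, hd2, rfl⟩ := this
  rw [Finsupp.add_apply]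
  exact add_le_add (hP d1 hd1 i) (hQ d2 hd2 i)

lemma DegLe.one : DegLe (1 : MvPolynomial (Fin m) ℂ) 0 := by
  intro d hd i
  have := MvPolynomial.support_monomial_subset hd
  rw [Finset.mem_singleton] at this
  subst this
  simp

lemma DegLe.XsubC (i0 : Fin m) (a : ℂ) : DegLe (X i0 - C a) 1 := by
  classical
  intro d hd i
  by_contra hc
  push_neg at hc
  rw [MvPolynomial.mem_support_iff] at hd
  apply hd
  rw [MvPolynomial.coeff_sub]
  have h1 : coeff d (X i0 : MvPolynomial (Fin m) ℂ) = 0 := by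
    rw [coeff_X', if_neg]
    intro h
    have := congrArg (fun e => e i) h
    simp only [Finsupp.single_apply] at this
    split at this <;> omega
  have h2 : coeff d (C a : MvPolynomial (Fin m) ℂ) = 0 := by
    rw [coeff_C, if_neg]
    intro h
    have := congrArg (fun e => e i) h
    simp only [Finsupp.coe_zero, Pi.zero_apply] at this
    omega
  rw [h1, h2, sub_zero]

lemma DegLe.pow {P : MvPolynomial (Fin m) ℂ} {a : ℕ} (hP : DegLe P a) (n : ℕ) :
    DegLe (P ^ n) (n * a) := by
  induction n with
  | zero => simpa using DegLe.one
  | succ n ih =>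
    rw [pow_succ, Nat.succ_mul]
    exact ih.mul hP

lemma DegLe.smul {P : MvPolynomial (Fin m) ℂ} {a : ℕ} (hP : DegLe P a) (r : ℂ) :
    DegLe (r • P) a := fun d hd i => hP d (Finsupp.support_smul hd) i

lemma DegLe.sum {ι : Type*} [DecidableEq ι] {s : Finset ι} {F : ι → MvPolynomial (Fin m) ℂ}
    {a : ℕ} (h : ∀ k ∈ s, DegLe (F k) a) : DegLe (∑ k ∈ s, F k) a := by
  intro d hd i
  have := MvPolynomial.support_sum hd
  rw [Finset.mem_biUnion] at this
  obtain ⟨k, hk, hdk⟩ := this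
  exact h k hk d hdk i

lemma DegLe.prod {ι : Type*} [DecidableEq ι] {s : Finset ι} {F : ι → MvPolynomial (Fin m) ℂ}
    {a : ι → ℕ} (h : ∀ k ∈ s, DegLe (F k) (a k)) :
    DegLe (∏ k ∈ s, F k) (∑ k ∈ s, a k) := by
  induction s using Finset.induction with
  | empty => simpa using DegLe.one
  | insert b s' hk ih =>
    rw [Finset.prod_insert hk, Finset.sum_insert hk]
    exact (h b (Finset.mem_insert_self b s')).mul
      (ih fun k hks => h k (Finset.mem_insert_of_mem hks))

lemma DegLe.Qb (κ : ℂ) (p : ℕ) (t : Fin m → ℂ) (β : Fin m → Fin (p + 1)) :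
    DegLe (Qb κ p t β) p := by
  refine DegLe.sum fun z _ => ?_
  intro d hd i
  have := MvPolynomial.support_monomial_subset hd
  rw [Finset.mem_singleton] at this
  subst this
  rw [toF_apply]
  exact Nat.lt_succ_iff.mp (z i).2

-- the jet correction at one point
def toFin (p : ℕ) (δ : Fin m → ℕ) : Fin m → Fin (p + 1) :=
  fun j => ⟨min (δ j) p, by omega⟩

lemma toFin_coe {p : ℕ} {δ : Fin m → ℕ} (hδ : ∀ j, δ j ≤ p) :
    (fun j => ((toFin p δ j : ℕ))) = δ := by
  funext j
  simp [toFin, min_eq_left (hδ j)]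

lemma eval_Dmulti_Qb' (κ : ℂ) (p : ℕ) (t : Fin m → ℂ) (hκ : κ ≠ 0) (ht : ∀ j, t j ≠ 0)
    (γ : Fin m → Fin (p + 1)) (δ : Fin m → ℕ) (hδ : ∀ j, δ j ≤ p) :
    eval t (Dmulti κ δ (Qb κ p t γ)) = if toFin p δ = γ then 1 else 0 := by
  have hfe : (fun j => (⟨δ j, Nat.lt_succ_of_le (hδ j)⟩ : Fin (p + 1))) = toFin p δ := by
    funext j
    exact Fin.ext (by simp [toFin, min_eq_left (hδ j)])
  rw [eval_Dmulti_Qb κ p t hκ ht γ δ hδ, hfe]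

lemma jet_correction (κ : ℂ) (p : ℕ) (t : Fin m → ℂ) (hκ : κ ≠ 0) (ht : ∀ j, t j ≠ 0)
    (V : MvPolynomial (Fin m) ℂ) (hV : eval t V ≠ 0)
    (G : (Fin m → Fin (p + 1)) → ℂ) :
    ∃ w : MvPolynomial (Fin m) ℂ, DegLe w p ∧
      ∀ α : Fin m → ℕ, (∀ j, α j ≤ p) →
        eval t (Dmulti κ α (V * w)) = G (toFin p α) := by
  classical
  set Tm : Matrix (Fin m → Fin (p + 1)) (Fin m → Fin (p + 1)) ℂ := fun β γ =>
    eval t (Dmulti κ (fun j => (β j : ℕ)) (V * Qb κ p t γ)) with hTm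
  have hmulVec : ∀ (v : (Fin m → Fin (p + 1)) → ℂ) (β : Fin m → Fin (p + 1)),
      Tm.mulVec v β = ∑ γ, Tm β γ * v γ := by
    intro v β
    simp [Matrix.mulVec, dotProduct]
  have hker : ∀ v : (Fin m → Fin (p + 1)) → ℂ, Tm.mulVec v = 0 → v = 0 := by
    intro v hv0
    by_contra hv
    have hex : ∃ γ, v γ ≠ 0 := by
      by_contra hc
      push_neg at hc
      exact hv (funext hc)
    obtain ⟨γ0, hγ0⟩ := hex
    set S : Finset (Fin m → Fin (p + 1)) :=
      Finset.univ.filter (fun γ => v γ ≠ 0) with hS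
    have hSne : S.Nonempty := ⟨γ0, by rw [hS, Finset.mem_filter]; exact ⟨Finset.mem_univ _, hγ0⟩⟩
    obtain ⟨β, hβS, hmin⟩ := Finset.exists_min_image S (fun γ => ∑ j, (γ j : ℕ)) hSne
    have hvβ : v β ≠ 0 := (Finset.mem_filter.mp hβS).2
    set αβ : Fin m → ℕ := fun j => (β j : ℕ) with hαβ
    have hαβp : ∀ j, αβ j ≤ p := fun j => Nat.lt_succ_iff.mp (β j).2
    obtain ⟨cc, hccα, hcc⟩ := leibniz_lite κ t αβ V
    have hc1 : Tm.mulVec v β = ∑ δ ∈ below αβ, cc δ * v (toFin p δ) := by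
      rw [hmulVec]
      have h1 : ∀ γ, Tm β γ * v γ =
          ∑ δ ∈ below αβ, cc δ * ((if toFin p δ = γ then 1 else 0) * v γ) := by
        intro γ
        rw [hTm]
        show eval t (Dmulti κ (fun j => (β j : ℕ)) (V * Qb κ p t γ)) * v γ = _
        rw [hcc (Qb κ p t γ), Finset.sum_mul]
        refine Finset.sum_congr rfl fun δ hδ => ?_
        have hδp : ∀ j, δ j ≤ p := fun j => le_trans (mem_below.mp hδ j) (hαβp j)
        rw [eval_Dmulti_Qb' κ p t hκ ht γ δ hδp]
        ring
      rw [Finset.sum_congr rfl fun γ _ => h1 γ, Finset.sum_comm]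
      refine Finset.sum_congr rfl fun δ _ => ?_
      rw [← Finset.mul_sum]
      congr 1
      have h2 : ∀ γ : Fin m → Fin (p + 1),
          (if toFin p δ = γ then (1 : ℂ) else 0) * v γ =
            (if toFin p δ = γ then v γ else 0) := by
        intro γ
        split <;> simp
      rw [Finset.sum_congr rfl fun γ _ => h2 γ, Finset.sum_ite_eq]
      rw [if_pos (Finset.mem_univ _)]
    have hsingle : ∑ δ ∈ below αβ, cc δ * v (toFin p δ) = cc αβ * v (toFin p αβ) := by
      refine Finset.sum_eq_single αβ ?_ ?_
      · intro δ hδ hne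
        have hδle := mem_below.mp hδ
        rcases eq_or_ne (v (toFin p δ)) 0 with h0 | h0
        · rw [h0, mul_zero]
        exfalso
        have hmem : toFin p δ ∈ S := by
          rw [hS, Finset.mem_filter]
          exact ⟨Finset.mem_univ _, h0⟩
        have hminle : (∑ j, ((β j : ℕ))) ≤ ∑ j, ((toFin p δ j : ℕ)) :=
          hmin (toFin p δ) hmem
        have hsumeq : ∑ j, ((toFin p δ j : ℕ)) = ∑ j, δ j := by
          refine Finset.sum_congr rfl fun j _ => ?_
          simp [toFin, min_eq_left (le_trans (hδle j) (hαβp j))]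
        have hlt : ∑ j, δ j < ∑ j, ((β j : ℕ)) := by
          have hle : ∀ j, δ j ≤ αβ j := hδle
          have hne2 : ∃ j, δ j ≠ αβ j := by
            by_contra hc
            push_neg at hc
            exact hne (funext hc)
          obtain ⟨j0, hj0⟩ := hne2
          exact Finset.sum_lt_sum (fun j _ => hle j)
            ⟨j0, Finset.mem_univ j0, lt_of_le_of_ne (hle j0) hj0⟩
        rw [hsumeq] at hminle
        omega
      · intro h
        exfalso
        exact h (mem_below.mpr fun j => le_refl _)
    have htf : toFin p αβ = β := by
      funext j
      exact Fin.ext (by simp [toFin, hαβ, min_eq_left (hαβp j), Nat.lt_succ_iff.mp (β j).2])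
    have hTv : Tm.mulVec v β = eval t V * v β := by
      rw [hc1, hsingle, htf, hccα]
    have hzero : eval t V * v β = 0 := by
      rw [← hTv, hv0]
      rfl
    rcases mul_eq_zero.mp hzero with h | h
    · exact hV h
    · exact hvβ h
  have hinj : Function.Injective Tm.mulVecLin := by
    rw [← LinearMap.ker_eq_bot]
    rw [LinearMap.ker_eq_bot']
    intro v hvmem
    exact hker v hvmem
  have hsurj : Function.Surjective Tm.mulVecLin :=
    LinearMap.injective_iff_surjective.mp hinj
  obtain ⟨v, hv⟩ := hsurj G
  refine ⟨∑ γ, v γ • Qb κ p t γ, ?_, ?_⟩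
  · exact DegLe.sum fun γ _ => (DegLe.Qb κ p t γ).smul (v γ)
  · intro α hα
    have hres : (fun j => ((toFin p α j : ℕ))) = α := toFin_coe hα
    have hexp : V * (∑ γ, v γ • Qb κ p t γ) = ∑ γ, v γ • (V * Qb κ p t γ) := by
      rw [Finset.mul_sum]
      exact Finset.sum_congr rfl fun γ _ => by rw [mul_smul_comm]
    rw [hexp, Dmulti_sum, map_sum]
    have hterm : ∀ γ, eval t (Dmulti κ α (v γ • (V * Qb κ p t γ))) =
        Tm (toFin p α) γ * v γ := by
      intro γ
      rw [Dmulti_smul, smul_eq_C_mul, map_mul, eval_C, hTm]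
      show v γ * eval t (Dmulti κ α (V * Qb κ p t γ)) =
        eval t (Dmulti κ (fun j => ((toFin p α j : ℕ))) (V * Qb κ p t γ)) * v γ
      rw [hres]
      ring
    rw [Finset.sum_congr rfl fun γ _ => hterm γ, ← hmulVec v (toFin p α)]
    have : Tm.mulVec v = G := hv
    rw [this]

-- main algebraic existence theorem
section MainAlg

variable (p : ℕ) {N : ℕ} (tt : Fin N → Fin m → ℂ)

noncomputable def Vfac (hsep : ∀ k j : Fin N, k ≠ j → ∃ i, tt k i ≠ tt j i) (k j : Fin N) :
    MvPolynomial (Fin m) ℂ :=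
  if h : k ≠ j then
    (X (Classical.choose (hsep k j h)) - C (tt j (Classical.choose (hsep k j h)))) ^ (p + 1)
  else 1

noncomputable def Vpoly (hsep : ∀ k j : Fin N, k ≠ j → ∃ i, tt k i ≠ tt j i) (k : Fin N) :
    MvPolynomial (Fin m) ℂ :=
  ∏ j ∈ Finset.univ.erase k, Vfac p tt hsep k j

lemma eval_Vpoly_ne (hsep : ∀ k j : Fin N, k ≠ j → ∃ i, tt k i ≠ tt j i) (k : Fin N) :
    eval (tt k) (Vpoly p tt hsep k) ≠ 0 := by
  rw [Vpoly, map_prod]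
  refine Finset.prod_ne_zero_iff.mpr fun j hj => ?_
  have hkj : k ≠ j := (Finset.mem_erase.mp hj).1.symm
  simp only [Vfac]
  rw [dif_pos hkj, map_pow, map_sub, eval_X, eval_C]
  exact pow_ne_zero _ (sub_ne_zero_of_ne (Classical.choose_spec (hsep k j hkj)))

lemma degle_Vpoly (hsep : ∀ k j : Fin N, k ≠ j → ∃ i, tt k i ≠ tt j i) (k : Fin N) :
    DegLe (Vpoly p tt hsep k) ((p + 1) * (N - 1)) := by
  have h := DegLe.prod (s := Finset.univ.erase k) (a := fun _ => p + 1)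
    (F := fun j => Vfac p tt hsep k j) ?_
  · have hcard : ∑ _j ∈ Finset.univ.erase k, (p + 1) = (p + 1) * (N - 1) := by
      rw [Finset.sum_const, Finset.card_erase_of_mem (Finset.mem_univ k)]
      rw [Finset.card_univ, Fintype.card_fin, smul_eq_mul, mul_comm]
    rwa [hcard] at h
  · intro j hj
    have hkj : k ≠ j := (Finset.mem_erase.mp hj).1.symm
    simp only [Vfac]
    rw [dif_pos hkj]
    have := (DegLe.XsubC (Classical.choose (hsep k j hkj))
      (tt j (Classical.choose (hsep k j hkj)))).pow (p + 1)
    rwa [mul_one] at this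

theorem main_alg (κ : ℂ) (hκ : κ ≠ 0)
    (htne : ∀ k i, tt k i ≠ 0)
    (hsep : ∀ k j : Fin N, k ≠ j → ∃ i, tt k i ≠ tt j i)
    (g : Fin N → (Fin m → ℕ) → ℂ) :
    ∃ P : MvPolynomial (Fin m) ℂ,
      DegLe P ((p + 1) * N) ∧
      ∀ (k : Fin N) (α : Fin m → ℕ), (∀ j, α j ≤ p) →
        eval (tt k) (Dmulti κ α P) = g k α := by
  classical
  have hW : ∀ k : Fin N, ∃ w : MvPolynomial (Fin m) ℂ, DegLe w p ∧
      ∀ α : Fin m → ℕ, (∀ j, α j ≤ p) →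
        eval (tt k) (Dmulti κ α (Vpoly p tt hsep k * w)) =
          g k (fun j => ((toFin p α j : ℕ))) := by
    intro k
    obtain ⟨w, hw1, hw2⟩ := jet_correction κ p (tt k) hκ (htne k)
      (Vpoly p tt hsep k) (eval_Vpoly_ne p tt hsep k)
      (fun β => g k (fun j => ((β j : ℕ))))
    exact ⟨w, hw1, fun α hα => hw2 α hα⟩
  choose w hwdeg hwjet using hW
  refine ⟨∑ k, Vpoly p tt hsep k * w k, ?_, ?_⟩
  · refine DegLe.sum fun k _ => ?_
    have h1 : DegLe (Vpoly p tt hsep k * w k) ((p + 1) * (N - 1) + p) :=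
      (degle_Vpoly p tt hsep k).mul (hwdeg k)
    refine h1.mono ?_
    have hN : 1 ≤ N := by
      have := k.2
      omega
    calc (p + 1) * (N - 1) + p ≤ (p + 1) * (N - 1) + (p + 1) := by omega
      _ = (p + 1) * ((N - 1) + 1) := by ring
      _ = (p + 1) * N := by
          congr 1
          omega
  · intro k α hα
    rw [Dmulti_sum, map_sum]
    rw [Finset.sum_eq_single k]
    · rw [hwjet k α hα]
      congr 1
      exact toFin_coe hα
    · intro k' _ hk'
      have hfac : (X (Classical.choose (hsep k' k hk')) -
          C (tt k (Classical.choose (hsep k' k hk')))) ^ (p + 1) ∣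
          Vpoly p tt hsep k' * w k' := by
        refine Dvd.dvd.mul_right ?_ _
        have hmem : k ∈ Finset.univ.erase k' :=
          Finset.mem_erase.mpr ⟨fun h => hk' h.symm, Finset.mem_univ k⟩
        have := Finset.dvd_prod_of_mem (fun j => Vfac p tt hsep k' j) hmem
        simp only [Vfac] at this
        rw [dif_pos hk'] at this
        exact this
      have hdvd := dvd_Dmulti κ (Classical.choose (hsep k' k hk'))
        (tt k (Classical.choose (hsep k' k hk'))) (p + 1) α hfac
      have hone : (X (Classical.choose (hsep k' k hk')) -
          C (tt k (Classical.choose (hsep k' k hk')))) ∣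
          Dmulti κ α (Vpoly p tt hsep k' * w k') := by
        refine dvd_trans (dvd_pow_self _ ?_) hdvd
        have := hα (Classical.choose (hsep k' k hk'))
        omega
      obtain ⟨R, hR⟩ := hone
      rw [hR, map_mul, map_sub, eval_X, eval_C, sub_self, zero_mul]
    · intro h
      exact absurd (Finset.mem_univ k) h

end MainAlg

lemma exp_inj_Ico {T : ℝ} (hT : 0 < T) {c : ℝ} (hcdef : c = 2 * Real.pi / T)
    {u v : ℝ} (hu : u ∈ Set.Ico 0 T) (hv : v ∈ Set.Ico 0 T)
    (h : Complex.exp (Complex.I * ((c : ℂ) * (u : ℂ))) =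
      Complex.exp (Complex.I * ((c : ℂ) * (v : ℂ)))) : u = v := by
  subst hcdef
  set c : ℝ := 2 * Real.pi / T with hc
  have hπ := Real.pi_pos
  have hcpos : 0 < c := by positivity
  rw [Complex.exp_eq_exp_iff_exists_int] at h
  obtain ⟨n, hn⟩ := h
  have h3 : Complex.I * ((c : ℂ) * u) = Complex.I * ((c : ℂ) * v + n * (2 * Real.pi)) := by
    push_cast at hn ⊢
    linear_combination hn
  have h4 := mul_left_cancel₀ Complex.I_ne_zero h3
  have h5 : c * u = c * v + n * (2 * Real.pi) := by exact_mod_cast h4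
  have hcT : c * T = 2 * Real.pi := by
    rw [hc]
    field_simp
  have hb1 : 0 ≤ c * u := mul_nonneg hcpos.le hu.1
  have hb2 : c * u < 2 * Real.pi := by
    calc c * u < c * T := by exact mul_lt_mul_of_pos_left hu.2 hcpos
      _ = 2 * Real.pi := hcT
  have hb3 : 0 ≤ c * v := mul_nonneg hcpos.le hv.1
  have hb4 : c * v < 2 * Real.pi := by
    calc c * v < c * T := by exact mul_lt_mul_of_pos_left hv.2 hcpos
      _ = 2 * Real.pi := hcT
  have hn1 : (-1 : ℝ) < n := by nlinarith
  have hn2 : (n : ℝ) < 1 := by nlinarith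
  have hn0 : n = 0 := by
    have e1 : (-1 : ℤ) < n := by exact_mod_cast hn1
    have e2 : n < (1 : ℤ) := by exact_mod_cast hn2
    omega
  rw [hn0] at h5
  push_cast at h5
  have : c * u = c * v := by linarith
  exact mul_left_cancel₀ hcpos.ne' this


lemma multiDeriv_upoly (c : ℝ) (α : Fin m → ℕ) (P : MvPolynomial (Fin m) ℂ) :
    multiDeriv α (upoly c P) = upoly c (Dmulti (Complex.I * c) α P) := by
  rw [multiDeriv]
  exact multiDeriv_foldr_upoly c α P


set_option maxHeartbeats 1000000 in
/-- Hermite–Birkhoff interpolation of all derivative data of order `≤ p` at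
`N` distinct points of `[0,T)^m` by a trigonometric polynomial with at most
`((p+1)N+1)^m` frequencies from the lattice `(2π/T)ℤ^m`. -/
theorem hermite_birkhoff_trig_interpolation
    (T : ℝ) (hT : 0 < T) (m p N : ℕ) (hN : 1 ≤ N)
    (x : Fin N → EuclideanSpace ℝ (Fin m))
    (hdist : Function.Injective x)
    (hbox : ∀ k i, x k i ∈ Set.Ico (0 : ℝ) T) :
    ∀ f : Fin N → (Fin m → ℕ) → ℂ,
      ∃ (Λ : Finset (Fin m → ℝ)) (a : (Fin m → ℝ) → ℂ),
        (∀ w ∈ Λ, ∀ j, ∃ z : ℤ, w j = 2 * Real.pi / T * z) ∧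
        Λ.card ≤ ((p + 1) * N + 1) ^ m ∧
        ∀ (k : Fin N) (α : Fin m → ℕ), (∑ j, α j) ≤ p →
          multiDeriv α
            (fun y => ∑ w ∈ Λ, a w *
              Complex.exp (Complex.I * ∑ j, (w j : ℂ) * (y j : ℂ)))
            (x k) = f k α := by
  intro f
  classical
  set c : ℝ := 2 * Real.pi / T with hc
  have hπ := Real.pi_pos
  have hcpos : 0 < c := by positivity
  set κ : ℂ := Complex.I * c with hκdef
  have hκ : κ ≠ 0 := mul_ne_zero Complex.I_ne_zero (by
    simp only [ne_eq, Complex.ofReal_eq_zero]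
    exact hcpos.ne')
  set tt : Fin N → Fin m → ℂ := fun k j =>
    Complex.exp (Complex.I * ((c : ℂ) * ((x k j : ℝ) : ℂ))) with htt
  have htne : ∀ k i, tt k i ≠ 0 := fun k i => Complex.exp_ne_zero _
  have hsep : ∀ k j : Fin N, k ≠ j → ∃ i, tt k i ≠ tt j i := by
    intro k j hkj
    have hx : x k ≠ x j := fun h => hkj (hdist h)
    have hex : ∃ i, x k i ≠ x j i := by
      by_contra hcon
      push_neg at hcon
      exact hx (PiLp.ext hcon)
    obtain ⟨i, hi⟩ := hex
    refine ⟨i, fun hEq => hi ?_⟩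
    exact exp_inj_Ico hT hc (hbox k i) (hbox j i) hEq
  obtain ⟨P, hdeg, hjet⟩ := main_alg p tt κ hκ htne hsep f
  refine ⟨P.support.image (fun d => fun j => c * ((d j : ℕ) : ℝ)),
    fun w => coeff (Finsupp.equivFunOnFinite.symm fun j => ⌊w j / c⌋₊) P, ?_, ?_, ?_⟩
  · intro w hw j
    rw [Finset.mem_image] at hw
    obtain ⟨d, hd, rfl⟩ := hw
    refine ⟨(d j : ℤ), ?_⟩
    rw [hc]
    push_cast
    ring
  · calc (P.support.image (fun d => fun j => c * ((d j : ℕ) : ℝ))).card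
        ≤ P.support.card := Finset.card_image_le
      _ ≤ (((Fintype.piFinset fun _ : Fin m => Finset.range ((p + 1) * N + 1)).image
            (fun z : Fin m → ℕ => Finsupp.equivFunOnFinite.symm z))).card := by
          refine Finset.card_le_card ?_
          intro d hd
          rw [Finset.mem_image]
          refine ⟨fun j => d j, ?_, ?_⟩
          · rw [Fintype.mem_piFinset]
            intro j
            rw [Finset.mem_range]
            exact Nat.lt_succ_of_le (hdeg d hd j)
          · exact Finsupp.equivFunOnFinite_symm_coe d
      _ ≤ ((Fintype.piFinset fun _ : Fin m => Finset.range ((p + 1) * N + 1))).card :=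
          Finset.card_image_le
      _ = ((p + 1) * N + 1) ^ m := by
          rw [Fintype.card_piFinset]
          simp [Finset.card_range]
  · intro k α hsum
    have hα : ∀ j, α j ≤ p := fun j =>
      le_trans (Finset.single_le_sum (f := α) (fun i _ => Nat.zero_le _) (Finset.mem_univ j))
        hsum
    have hinj : ∀ d ∈ P.support, ∀ d' ∈ P.support,
        (fun j => c * ((d j : ℕ) : ℝ)) = (fun j => c * ((d' j : ℕ) : ℝ)) → d = d' := by
      intro d _ d' _ hEq
      ext j
      have := congrFun hEq j
      have h2 : ((d j : ℕ) : ℝ) = ((d' j : ℕ) : ℝ) := mul_left_cancel₀ hcpos.ne' this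
      exact_mod_cast h2
    have hfun : (fun y : EuclideanSpace ℝ (Fin m) =>
        ∑ w ∈ P.support.image (fun d => fun j => c * ((d j : ℕ) : ℝ)),
          (coeff (Finsupp.equivFunOnFinite.symm fun j => ⌊w j / c⌋₊) P) *
            Complex.exp (Complex.I * ∑ j, (w j : ℂ) * (y j : ℂ))) = upoly c P := by
      funext y
      rw [Finset.sum_image hinj, upoly_eq_sum c P (subset_refl _) y]
      refine Finset.sum_congr rfl fun d hd => ?_
      congr 1
      · have hfl : ∀ j : Fin m, ⌊(c * ((d j : ℕ) : ℝ)) / c⌋₊ = d j := by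
          intro j
          rw [mul_div_cancel_left₀ _ hcpos.ne']
          exact Nat.floor_natCast _
        have : (fun j => ⌊(c * ((d j : ℕ) : ℝ)) / c⌋₊) = fun j => d j := funext hfl
        rw [this]
        congr 1
        exact Finsupp.equivFunOnFinite_symm_coe d
      · rw [lform_apply]
        congr 1
        rw [Finset.mul_sum]
        refine Finset.sum_congr rfl fun j _ => ?_
        push_cast
        ring
    rw [hfun, multiDeriv_upoly]
    show upoly c (Dmulti (Complex.I * (c : ℂ)) α P) (x k) = f k α
    have hjk := hjet k α hα
    rw [htt, hκdef] at hjk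
    rw [upoly]
    exact hjk
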